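/- Let u, v, w be linearly independent unit vectors in the Euclidean space ℝ³, and let l₁ = arccos⟨v, w⟩, l₂ = arccos⟨u, w⟩, l₃ = arccos⟨u, v⟩ be the pairwise spherical distances. Then each lᵢ lies in the open interval (0, π), the strict triangle inequalities hold (each lᵢ is less than the sum of the other two), and l₁ + l₂ + l₃ < 2π. -/

import Mathlib

set_option maxHeartbeats 1000000


open Real
open scoped RealInnerProductSpace

private lemma tri_aux {α β γ : ℝ} (hα : α ∈ Set.Ioo (0:ℝ) π) (hβ : β ∈ Set.Ioo (0:ℝ) π)
    (hγ : γ ∈ Set.Ioo (0:ℝ) π) (h : Real.cos (β + γ) < Real.cos α) : α < β + γ := by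
  by_contra h'
  push_neg at h'
  have : Real.cos α ≤ Real.cos (β + γ) :=
    Real.cos_le_cos_of_nonneg_of_le_pi (by linarith [hβ.1, hγ.1]) hα.2.le h'
  linarith

private lemma sum_aux {α β γ : ℝ} (hα : α ∈ Set.Ioo (0:ℝ) π) (hβ : β ∈ Set.Ioo (0:ℝ) π)
    (hγ : γ ∈ Set.Ioo (0:ℝ) π) (h : Real.cos (β + γ) < Real.cos α) : α + β + γ < 2 * π := by
  by_contra h'
  push_neg at h'
  have h1 : 2 * π - (β + γ) ≤ α := by linarith
  have : Real.cos α ≤ Real.cos (2 * π - (β + γ)) :=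
    Real.cos_le_cos_of_nonneg_of_le_pi (by linarith [hβ.2, hγ.2]) hα.2.le h1
  rw [Real.cos_two_pi_sub] at this
  linarith


private lemma sq_lt_one_aux {a b c : ℝ} (hb : b ^ 2 ≤ 1) (hc : c ^ 2 ≤ 1)
    (hdet : 0 < 1 + 2 * a * b * c - a ^ 2 - b ^ 2 - c ^ 2) : a ^ 2 < 1 := by
  nlinarith [sq_nonneg (b - a * c)]

private lemma key_aux {a b c : ℝ} (hb : b ^ 2 < 1) (hc : c ^ 2 < 1)
    (hdet : 0 < 1 + 2 * a * b * c - a ^ 2 - b ^ 2 - c ^ 2) :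
    b * c - Real.sqrt (1 - b ^ 2) * Real.sqrt (1 - c ^ 2) < a := by
  have hsb : Real.sqrt (1 - b ^ 2) ^ 2 = 1 - b ^ 2 := Real.sq_sqrt (by linarith)
  have hsc : Real.sqrt (1 - c ^ 2) ^ 2 = 1 - c ^ 2 := Real.sq_sqrt (by linarith)
  nlinarith [mul_nonneg (Real.sqrt_nonneg (1 - b ^ 2)) (Real.sqrt_nonneg (1 - c ^ 2)),
    sq_nonneg (a - b * c + Real.sqrt (1 - b ^ 2) * Real.sqrt (1 - c ^ 2))]

private lemma ioo_aux {a : ℝ} (h : a ^ 2 < 1) : -1 < a ∧ a < 1 :=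
  ⟨by nlinarith [sq_nonneg (a + 1)], by nlinarith [sq_nonneg (a - 1)]⟩

/-- The pairwise spherical distances of three linearly independent unit vectors in `ℝ³`
lie in `(0, π)`, satisfy the strict triangle inequalities, and have sum `< 2π`. -/
theorem spherical_triangle_side_lengths (u v w : EuclideanSpace ℝ (Fin 3))
    (hu : ‖u‖ = 1) (hv : ‖v‖ = 1) (hw : ‖w‖ = 1)
    (hli : LinearIndependent ℝ ![u, v, w])
    (l₁ l₂ l₃ : ℝ)
    (hl₁ : l₁ = Real.arccos ⟪v, w⟫)
    (hl₂ : l₂ = Real.arccos ⟪u, w⟫)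
    (hl₃ : l₃ = Real.arccos ⟪u, v⟫) :
    l₁ ∈ Set.Ioo (0 : ℝ) π ∧ l₂ ∈ Set.Ioo (0 : ℝ) π ∧ l₃ ∈ Set.Ioo (0 : ℝ) π ∧
    l₁ < l₂ + l₃ ∧ l₂ < l₁ + l₃ ∧ l₃ < l₁ + l₂ ∧
    l₁ + l₂ + l₃ < 2 * π := by
  set a : ℝ := ⟪v, w⟫ with ha
  set b : ℝ := ⟪u, w⟫ with hb
  set c : ℝ := ⟪u, v⟫ with hc
  clear_value a b c
  have ha1 : |a| ≤ 1 := by simpa [ha, hv, hw] using abs_real_inner_le_norm v w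
  have hb1 : |b| ≤ 1 := by simpa [hb, hu, hw] using abs_real_inner_le_norm u w
  have hc1 : |c| ≤ 1 := by simpa [hc, hu, hv] using abs_real_inner_le_norm u v
  have ha1' := abs_le.mp ha1
  have hb1' := abs_le.mp hb1
  have hc1' := abs_le.mp hc1
  -- coordinate expressions for the inner products and norms
  have ha' : a = v 0 * w 0 + v 1 * w 1 + v 2 * w 2 := by
    simp [ha, PiLp.inner_apply, RCLike.inner_apply, Fin.sum_univ_three]
    ring
  have hb' : b = u 0 * w 0 + u 1 * w 1 + u 2 * w 2 := by
    simp [hb, PiLp.inner_apply, RCLike.inner_apply, Fin.sum_univ_three]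
    ring
  have hc' : c = u 0 * v 0 + u 1 * v 1 + u 2 * v 2 := by
    simp [hc, PiLp.inner_apply, RCLike.inner_apply, Fin.sum_univ_three]
    ring
  have hu' : u 0 * u 0 + u 1 * u 1 + u 2 * u 2 = 1 := by
    have h := real_inner_self_eq_norm_sq u
    rw [hu] at h
    rw [PiLp.inner_apply] at h
    simp [PiLp.inner_apply, RCLike.inner_apply, Fin.sum_univ_three] at h
    linarith
  have hv' : v 0 * v 0 + v 1 * v 1 + v 2 * v 2 = 1 := by
    have h := real_inner_self_eq_norm_sq v
    rw [hv] at h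
    rw [PiLp.inner_apply] at h
    simp [PiLp.inner_apply, RCLike.inner_apply, Fin.sum_univ_three] at h
    linarith
  have hw' : w 0 * w 0 + w 1 * w 1 + w 2 * w 2 = 1 := by
    have h := real_inner_self_eq_norm_sq w
    rw [hw] at h
    rw [PiLp.inner_apply] at h
    simp [PiLp.inner_apply, RCLike.inner_apply, Fin.sum_univ_three] at h
    linarith
  -- the Gram determinant is positive
  have hdet : 0 < 1 + 2 * a * b * c - a ^ 2 - b ^ 2 - c ^ 2 := by
    set M : Matrix (Fin 3) (Fin 3) ℝ := Matrix.of ![(u : Fin 3 → ℝ), v, w] with hM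
    have hMli : LinearIndependent ℝ (fun i => M i) := by
      have := hli.map' (WithLp.linearEquiv 2 ℝ (Fin 3 → ℝ)).toLinearMap (by simp)
      convert this using 1
      · ext i j
        fin_cases i <;> rfl
      all_goals rfl
    have hMunit : IsUnit M := Matrix.linearIndependent_rows_iff_isUnit.mp hMli
    have hMdet : M.det ≠ 0 := by
      have := (Matrix.isUnit_iff_isUnit_det M).mp hMunit
      exact this.ne_zero
    have hGdet : (M * M.transpose).det = M.det ^ 2 := by
      rw [Matrix.det_mul, Matrix.det_transpose]; ring
    have hGdet2 : (M * M.transpose).det = 1 + 2 * a * b * c - a ^ 2 - b ^ 2 - c ^ 2 := by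
      rw [Matrix.det_fin_three]
      simp only [Matrix.mul_apply, Matrix.transpose_apply, Fin.sum_univ_three, hM,
        Matrix.of_apply, Matrix.cons_val_zero, Matrix.cons_val_one, Matrix.head_cons,
        Matrix.cons_val_two, Matrix.tail_cons]
      rw [ha', hb', hc']
      linear_combination ((v 0 * v 0 + v 1 * v 1 + v 2 * v 2) * (w 0 * w 0 + w 1 * w 1 + w 2 * w 2)
          - (v 0 * w 0 + v 1 * w 1 + v 2 * w 2) ^ 2) * hu'
        + ((w 0 * w 0 + w 1 * w 1 + w 2 * w 2)
          - (u 0 * w 0 + u 1 * w 1 + u 2 * w 2) ^ 2) * hv'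
        + (1 - (u 0 * v 0 + u 1 * v 1 + u 2 * v 2) ^ 2) * hw'
    have h2 : (0:ℝ) < M.det ^ 2 := pow_two_pos_of_ne_zero hMdet
    rw [← hGdet, hGdet2] at h2
    exact h2
  have ha2' : a ^ 2 ≤ 1 := by nlinarith [ha1'.1, ha1'.2]
  have hb2' : b ^ 2 ≤ 1 := by nlinarith [hb1'.1, hb1'.2]
  have hc2' : c ^ 2 ≤ 1 := by nlinarith [hc1'.1, hc1'.2]
  have ha2 : a ^ 2 < 1 := sq_lt_one_aux hb2' hc2' hdet
  have hb2 : b ^ 2 < 1 := sq_lt_one_aux ha2' hc2' (by linarith [hdet] : (0:ℝ) < 1 + 2 * b * a * c - b ^ 2 - a ^ 2 - c ^ 2)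
  have hc2 : c ^ 2 < 1 := sq_lt_one_aux ha2' hb2' (by linarith [hdet] : (0:ℝ) < 1 + 2 * c * a * b - c ^ 2 - a ^ 2 - b ^ 2)
  have haIoo : -1 < a ∧ a < 1 := ioo_aux ha2
  have hbIoo : -1 < b ∧ b < 1 := ioo_aux hb2
  have hcIoo : -1 < c ∧ c < 1 := ioo_aux hc2
  -- the angles are in (0, π)
  have memIoo : ∀ x : ℝ, -1 < x → x < 1 → Real.arccos x ∈ Set.Ioo (0:ℝ) π := by
    intro x h1 h2
    refine ⟨Real.arccos_pos.mpr h2, lt_of_le_of_ne (Real.arccos_le_pi x) ?_⟩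
    intro h
    have := Real.arccos_eq_pi.mp h
    linarith
  have hl₁m : l₁ ∈ Set.Ioo (0:ℝ) π := hl₁ ▸ memIoo a haIoo.1 haIoo.2
  have hl₂m : l₂ ∈ Set.Ioo (0:ℝ) π := hl₂ ▸ memIoo b hbIoo.1 hbIoo.2
  have hl₃m : l₃ ∈ Set.Ioo (0:ℝ) π := hl₃ ▸ memIoo c hcIoo.1 hcIoo.2
  -- cosines and sines
  have hcos₁ : Real.cos l₁ = a := by rw [hl₁]; exact Real.cos_arccos haIoo.1.le haIoo.2.le
  have hcos₂ : Real.cos l₂ = b := by rw [hl₂]; exact Real.cos_arccos hbIoo.1.le hbIoo.2.le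
  have hcos₃ : Real.cos l₃ = c := by rw [hl₃]; exact Real.cos_arccos hcIoo.1.le hcIoo.2.le
  have hsin₁ : Real.sin l₁ = Real.sqrt (1 - a ^ 2) := by rw [hl₁]; exact Real.sin_arccos a
  have hsin₂ : Real.sin l₂ = Real.sqrt (1 - b ^ 2) := by rw [hl₂]; exact Real.sin_arccos b
  have hsin₃ : Real.sin l₃ = Real.sqrt (1 - c ^ 2) := by rw [hl₃]; exact Real.sin_arccos c
  have hs₁ : Real.sqrt (1 - a ^ 2) ^ 2 = 1 - a ^ 2 := Real.sq_sqrt (by linarith)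
  have hs₂ : Real.sqrt (1 - b ^ 2) ^ 2 = 1 - b ^ 2 := Real.sq_sqrt (by linarith)
  have hs₃ : Real.sqrt (1 - c ^ 2) ^ 2 = 1 - c ^ 2 := Real.sq_sqrt (by linarith)
  have hs₁0 : 0 ≤ Real.sqrt (1 - a ^ 2) := Real.sqrt_nonneg _
  have hs₂0 : 0 ≤ Real.sqrt (1 - b ^ 2) := Real.sqrt_nonneg _
  have hs₃0 : 0 ≤ Real.sqrt (1 - c ^ 2) := Real.sqrt_nonneg _
  -- the key cosine inequalities
  have key₁ : Real.cos (l₂ + l₃) < Real.cos l₁ := by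
    rw [Real.cos_add, hcos₁, hcos₂, hcos₃, hsin₂, hsin₃]
    exact key_aux hb2 hc2 hdet
  have key₂ : Real.cos (l₁ + l₃) < Real.cos l₂ := by
    rw [Real.cos_add, hcos₁, hcos₂, hcos₃, hsin₁, hsin₃]
    exact key_aux ha2 hc2 (by linarith [hdet] : (0:ℝ) < 1 + 2 * b * a * c - b ^ 2 - a ^ 2 - c ^ 2)
  have key₃ : Real.cos (l₁ + l₂) < Real.cos l₃ := by
    rw [Real.cos_add, hcos₁, hcos₂, hcos₃, hsin₁, hsin₂]
    exact key_aux ha2 hb2 (by linarith [hdet] : (0:ℝ) < 1 + 2 * c * a * b - c ^ 2 - a ^ 2 - b ^ 2)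
  exact ⟨hl₁m, hl₂m, hl₃m, tri_aux hl₁m hl₂m hl₃m key₁, tri_aux hl₂m hl₁m hl₃m key₂,
    tri_aux hl₃m hl₁m hl₂m key₃, sum_aux hl₁m hl₂m hl₃m key₁⟩
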